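/- Let 𝒢 be a graph and c a nonzero chain with boundary δ_y − δ_x (x ≠ y). For every vertex z ∉ {x, y}, the sum of coefficients c(e) over edges e with positive coefficient and terminal vertex z equals the sum of coefficients c(e) over edges e with positive coefficient and origin z (Kirchhoff's node law). In particular, if some edge with positive coefficient terminates at z ∉ {x,y}, then some edge with positive coefficient originates at z. -/

import Mathlib

open scoped Classical

/-- The boundary of an antisymmetric chain: `∂c(v) = ∑_u c(u,v)`. -/
noncomputable def bnd {V : Type*} (c : (V × V) →₀ ℝ) : V →₀ ℝ :=
  c.sum fun e a => Finsupp.single e.2 a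

/-- Kirchhoff's node law for the directed graph `𝒮_c` of edges with positive
coefficient of a nonzero chain with boundary `δ_y - δ_x`: at every vertex
`z ∉ {x,y}`, incoming and outgoing coefficients balance; in particular an
incoming positive edge at `z` forces an outgoing positive edge at `z`. -/
theorem stmt10 {V : Type*} (Γ : SimpleGraph V) (x y : V) (hxy : x ≠ y)
    (c : (V × V) →₀ ℝ) (hc : c ≠ 0)
    (hanti : ∀ u v : V, c (u, v) = -c (v, u))
    (hsupp : ∀ e ∈ c.support, Γ.Adj e.1 e.2)
    (hbnd : bnd c = Finsupp.single y 1 - Finsupp.single x 1)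
    (z : V) (hzx : z ≠ x) (hzy : z ≠ y) :
    (∑ e ∈ c.support.filter fun e => 0 < c e ∧ e.2 = z, c e) =
      (∑ e ∈ c.support.filter fun e => 0 < c e ∧ e.1 = z, c e) ∧
    ((∃ e ∈ c.support, 0 < c e ∧ e.2 = z) →
      ∃ e ∈ c.support, 0 < c e ∧ e.1 = z) := by
  classical
  have hz : (bnd c) z = 0 := by
    rw [hbnd]
    simp [Finsupp.single_apply, hzx.symm, hzy.symm]
  have hz' : ∑ e ∈ c.support.filter (fun e => e.2 = z), c e = 0 := by
    rw [← hz]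
    simp only [bnd, Finsupp.sum_apply, Finsupp.sum, Finset.sum_apply', Finsupp.single_apply,
      Finset.sum_filter]
  have hsplit :
      (∑ e ∈ c.support.filter fun e => 0 < c e ∧ e.2 = z, c e) +
        (∑ e ∈ c.support.filter fun e => ¬ (0 < c e) ∧ e.2 = z, c e) = 0 := by
    have hset : (c.support.filter fun e => e.2 = z) =
        (c.support.filter fun e => 0 < c e ∧ e.2 = z) ∪
        (c.support.filter fun e => ¬ (0 < c e) ∧ e.2 = z) := by
      ext e
      simp only [Finset.mem_union, Finset.mem_filter]
      tauto
    have hdisj : Disjoint (c.support.filter fun e => 0 < c e ∧ e.2 = z)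
        (c.support.filter fun e => ¬ (0 < c e) ∧ e.2 = z) := by
      rw [Finset.disjoint_filter]
      rintro e _ ⟨h1, _⟩ ⟨h2, _⟩
      exact h2 h1
    rw [hset, Finset.sum_union hdisj] at hz'
    exact hz'
  have hneg : (∑ e ∈ c.support.filter fun e => ¬ (0 < c e) ∧ e.2 = z, c e) =
      - (∑ e ∈ c.support.filter fun e => 0 < c e ∧ e.1 = z, c e) := by
    rw [← Finset.sum_neg_distrib]
    apply Finset.sum_nbij' (fun e => e.swap) (fun e => e.swap)
    · rintro ⟨u, v⟩ he
      simp only [Finset.mem_filter, Finsupp.mem_support_iff, Prod.swap_prod_mk] at he ⊢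
      obtain ⟨hne, hnp, hv⟩ := he
      have h1 := hanti v u
      refine ⟨?_, ?_, hv⟩
      · rw [h1]; intro h; apply hne; linarith
      · rw [h1]
        rcases lt_trichotomy (c (u, v)) 0 with h | h | h
        · linarith
        · exact absurd h hne
        · exact absurd h hnp
    · rintro ⟨u, v⟩ he
      simp only [Finset.mem_filter, Finsupp.mem_support_iff, Prod.swap_prod_mk] at he ⊢
      obtain ⟨hne, hp, hu⟩ := he
      have h1 := hanti v u
      refine ⟨?_, ?_, hu⟩
      · rw [h1]; intro h; apply hne; linarith
      · rw [h1]; intro h; linarith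
    · intro e _; exact Prod.swap_swap e
    · intro e _; exact Prod.swap_swap e
    · rintro ⟨u, v⟩ _
      simp [hanti u v]
  have hmain : (∑ e ∈ c.support.filter fun e => 0 < c e ∧ e.2 = z, c e) =
      (∑ e ∈ c.support.filter fun e => 0 < c e ∧ e.1 = z, c e) := by
    linarith [hsplit, hneg.symm ▸ hsplit]
  refine ⟨hmain, ?_⟩
  rintro ⟨e, he, hpe, hez⟩
  by_contra hno
  push_neg at hno
  have hsum0 : (∑ e ∈ c.support.filter fun e => 0 < c e ∧ e.1 = z, c e) = 0 := by
    apply Finset.sum_eq_zero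
    intro f hf
    simp only [Finset.mem_filter] at hf
    exact absurd hf.2.2 (hno f hf.1 hf.2.1)
  have hpos : 0 < ∑ e ∈ c.support.filter fun e => 0 < c e ∧ e.2 = z, c e := by
    apply Finset.sum_pos
    · intro f hf
      simp only [Finset.mem_filter] at hf
      exact hf.2.1
    · exact ⟨e, Finset.mem_filter.2 ⟨he, hpe, hez⟩⟩
  rw [hmain, hsum0] at hpos
  exact lt_irrefl 0 hpos
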